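/- The Hopf map π is surjective from ℂ² onto ℝ × ℂ, and its fibers over nonzero points are exactly the orbits of the circle action θ·(z₁,z₂) = (e^{√−1 θ}z₁, e^{−√−1 θ}z₂): for every z = (z₁,z₂) ∈ ℂ² with z ≠ (0,0) and every w = (w₁,w₂) ∈ ℂ², one has π(w) = π(z) if and only if there exists θ ∈ ℝ with w₁ = e^{√−1 θ}z₁ and w₂ = e^{−√−1 θ}z₂. -/

import Mathlib

/-- The Hopf map `π(z₁,z₂) = (|z₁|² - |z₂|², 2 z₁ z₂) : ℂ² → ℝ × ℂ`. -/
noncomputable def hopfMap : ℂ × ℂ → ℝ × ℂ :=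
  fun z => (‖z.1‖ ^ 2 - ‖z.2‖ ^ 2, 2 * z.1 * z.2)

lemma hopf_surj : Function.Surjective hopfMap := by
  rintro ⟨t, c⟩
  set r : ℝ := Real.sqrt (t ^ 2 + ‖c‖ ^ 2) with hr
  have hr0 : |t| ≤ r := by
    rw [hr, ← Real.sqrt_sq_eq_abs]
    exact Real.sqrt_le_sqrt (by nlinarith [sq_nonneg (‖c‖)])
  have hrt : -t ≤ r ∧ t ≤ r := ⟨by linarith [(abs_le.mp hr0).1], (abs_le.mp hr0).2⟩
  have hrsq : r ^ 2 = t ^ 2 + ‖c‖ ^ 2 := Real.sq_sqrt (by positivity)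
  set a : ℝ := Real.sqrt ((r + t) / 2) with ha
  have hasq : a ^ 2 = (r + t) / 2 := Real.sq_sqrt (by linarith [hrt.1])
  by_cases h0 : a = 0
  · -- then r = -t and c = 0
    have h1 : (r + t) / 2 = 0 := by rw [← hasq, h0]; ring
    have hc : ‖c‖ = 0 := by nlinarith
    have hc0 : c = 0 := by simpa using hc
    refine ⟨⟨0, (Real.sqrt (-t) : ℂ)⟩, ?_⟩
    simp only [hopfMap, hc0, Prod.mk.injEq]
    constructor
    · simp [Complex.norm_real, abs_of_nonneg (Real.sqrt_nonneg (-t)),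
        Real.sq_sqrt (by linarith : (0:ℝ) ≤ -t)]
    · ring
  · refine ⟨⟨(a : ℂ), c / (2 * a)⟩, ?_⟩
    have ha0 : (0:ℝ) < a := lt_of_le_of_ne (Real.sqrt_nonneg _) (Ne.symm h0)
    have hane : (a : ℂ) ≠ 0 := by exact_mod_cast ne_of_gt ha0
    simp only [hopfMap, Prod.mk.injEq]
    constructor
    · rw [norm_div, norm_mul]
      simp only [Complex.norm_real, Real.norm_eq_abs, Complex.norm_two,
        abs_of_nonneg (le_of_lt ha0)]
      rw [div_pow, mul_pow]
      have : a ^ 2 ≠ 0 := by positivity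
      field_simp
      nlinarith
    · field_simp

/-- The Hopf map is surjective onto `ℝ × ℂ`, and its fibers over nonzero points are
exactly the orbits of the circle action `θ · (z₁, z₂) = (e^{iθ} z₁, e^{-iθ} z₂)`. -/
theorem stmt_13 :
    Function.Surjective hopfMap ∧
    ∀ z : ℂ × ℂ, z ≠ 0 → ∀ w : ℂ × ℂ,
      (hopfMap w = hopfMap z ↔
        ∃ θ : ℝ, w.1 = Complex.exp (Complex.I * (θ:ℂ)) * z.1 ∧
          w.2 = Complex.exp (-(Complex.I * (θ:ℂ))) * z.2) := by
  refine ⟨hopf_surj, fun z hz w => ⟨fun h => ?_, ?_⟩⟩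
  · -- forward
    simp only [hopfMap, Prod.mk.injEq] at h
    obtain ⟨h1, h2⟩ := h
    have hm : w.1 * w.2 = z.1 * z.2 := by linear_combination h2 / 2
    have habs : ‖w.1‖ * ‖w.2‖
        = ‖z.1‖ * ‖z.2‖ := by
      rw [← norm_mul, ← norm_mul, hm]
    have hAB : ‖w.1‖ = ‖z.1‖ ∧ ‖w.2‖ = ‖z.2‖ := by
      set a := ‖w.1‖; set b := ‖w.2‖
      set c := ‖z.1‖; set d := ‖z.2‖
      have ha : 0 ≤ a := norm_nonneg _
      have hb : 0 ≤ b := norm_nonneg _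
      have hc : 0 ≤ c := norm_nonneg _
      have hd : 0 ≤ d := norm_nonneg _
      have e : (a^2+b^2)^2 = (c^2+d^2)^2 := by
        linear_combination (a^2 - b^2 + c^2 - d^2) * h1 + 4*(a*b + c*d)*habs
      have hsum : a^2 + b^2 = c^2 + d^2 := by
        nlinarith [e, sq_nonneg a, sq_nonneg b, sq_nonneg c, sq_nonneg d]
      constructor
      · nlinarith [sq_nonneg (a - c), sq_nonneg (a + c)]
      · nlinarith [sq_nonneg (b - d), sq_nonneg (b + d)]
    obtain ⟨hA, hB⟩ := hAB
    by_cases hz1 : z.1 = 0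
    · -- then z.2 ≠ 0
      have hz2 : z.2 ≠ 0 := by
        intro h'; exact hz (Prod.ext hz1 h')
      have hw1 : w.1 = 0 := by
        have := hA; rw [hz1] at this; simpa using this
      set u := w.2 / z.2 with hu
      have huabs : ‖u‖ = 1 := by
        rw [hu, norm_div, hB, div_self]; simpa using hz2
      have hue : Complex.exp (↑u.arg * Complex.I) = u := by
        have := Complex.norm_mul_exp_arg_mul_I u
        rwa [huabs, Complex.ofReal_one, one_mul] at this
      refine ⟨-u.arg, ?_, ?_⟩
      · rw [hw1, hz1, mul_zero]
      · push_cast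
        rw [show -(Complex.I * -(u.arg:ℂ)) = ↑u.arg * Complex.I by ring, hue,
          hu, div_mul_cancel₀ _ hz2]
    · have hw1 : w.1 ≠ 0 := by
        intro h'; rw [h'] at hA; simp at hA
        exact hz1 (norm_eq_zero.mp hA.symm)
      set u := w.1 / z.1 with hu
      have huabs : ‖u‖ = 1 := by
        rw [hu, norm_div, hA, div_self]; simpa using hz1
      have hune : u ≠ 0 := by
        intro h'; rw [h'] at huabs; simp at huabs
      have hue : Complex.exp (↑u.arg * Complex.I) = u := by
        have := Complex.norm_mul_exp_arg_mul_I u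
        rwa [huabs, Complex.ofReal_one, one_mul] at this
      refine ⟨u.arg, ?_, ?_⟩
      · rw [show Complex.I * (u.arg:ℂ) = ↑u.arg * Complex.I by ring, hue, hu,
          div_mul_cancel₀ _ hz1]
      · rw [show -(Complex.I * (u.arg:ℂ)) = -(↑u.arg * Complex.I) by ring,
          Complex.exp_neg, hue, hu]
        field_simp
        linear_combination hm
  · rintro ⟨θ, hw1, hw2⟩
    simp only [hopfMap, Prod.mk.injEq, hw1, hw2]
    have he1 : ‖Complex.exp (Complex.I * (θ:ℂ))‖ = 1 := by
      rw [mul_comm]; exact Complex.norm_exp_ofReal_mul_I θ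
    have he2 : ‖Complex.exp (-(Complex.I * (θ:ℂ)))‖ = 1 := by
      rw [Complex.exp_neg, norm_inv, he1]; norm_num
    constructor
    · rw [norm_mul, norm_mul, he1, he2, one_mul, one_mul]
    · have : Complex.exp (Complex.I * (θ:ℂ)) * Complex.exp (-(Complex.I * (θ:ℂ))) = 1 := by
        rw [← Complex.exp_add]; simp
      linear_combination 2 * z.1 * z.2 * this
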